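/- Let G be a group with a finite symmetric generating set S admitting an automatic structure (S, L). Then G satisfies the quadratic radial isoperimetric inequality: there exist a finite set R of words over S representing the identity e, whose normal closure in F_S is the kernel of μ : F_S → G, and a constant C > 0, such that every word w = s₁⋯sₙ over S representing e satisfies Area_R(w) ≤ C · Σ_{i=1}^n (d_S(w̄(i), e) + 1). -/

import Mathlib

open scoped Pointwise

/-- The product in `G` of a word over the subset `S ⊆ G`. -/
def wordProd {G : Type*} [Group G] (S : Set G) (w : List S) : G :=
  (w.map (fun s => (s : G))).prod

/-- The word metric `d_S(a,b)`: the least `n` such that `b⁻¹ * a` is a product of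
`n` elements of `S`. -/
noncomputable def wordDist {G : Type*} [Group G] (S : Set G) (a b : G) : ℕ :=
  sInf {n | ∃ w : List S, w.length = n ∧ wordProd S w = b⁻¹ * a}

/-- The evaluation homomorphism `μ : F_S → G` from the free group on `S`. -/
noncomputable def muEval {G : Type*} [Group G] (S : Set G) : FreeGroup S →* G :=
  FreeGroup.lift (fun s => (s : G))

/-- A word over `S`, regarded as an element of the free group `F_S`. -/
def wordToFree {G : Type*} [Group G] (S : Set G) (w : List S) : FreeGroup S :=
  (w.map FreeGroup.of).prod

/-- The combinatorial area of a word `w` over `S` with respect to the relator set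
`R ⊆ F_S`: the least `k` such that `w = ∏_{i=1}^k vᵢ rᵢ vᵢ⁻¹` in `F_S` with each
`rᵢ ∈ R` or `rᵢ⁻¹ ∈ R`. -/
noncomputable def area {G : Type*} [Group G] (S : Set G) (R : Set (FreeGroup S))
    (w : List S) : ℕ :=
  sInf {k | ∃ v r : Fin k → FreeGroup S,
    (∀ i, r i ∈ R ∨ (r i)⁻¹ ∈ R) ∧
    wordToFree S w = (List.ofFn (fun i => v i * r i * (v i)⁻¹)).prod}

set_option linter.unusedSectionVars false
set_option linter.unusedTactic false
set_option linter.unusedVariables false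

namespace QRIso

variable {G : Type*} [Group G] {S : Set G}

lemma wordProd_nil : wordProd S [] = 1 := rfl

lemma wordProd_append (u v : List S) :
    wordProd S (u ++ v) = wordProd S u * wordProd S v := by
  simp [wordProd]

lemma wordProd_cons (s : S) (w : List S) :
    wordProd S (s :: w) = (s : G) * wordProd S w := by
  simp [wordProd]

lemma wordProd_singleton (s : S) : wordProd S [s] = (s : G) := by
  simp [wordProd]

lemma wordToFree_nil : wordToFree S ([] : List S) = 1 := rfl

lemma wordToFree_append (u v : List S) :
    wordToFree S (u ++ v) = wordToFree S u * wordToFree S v := by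
  simp [wordToFree]

lemma muEval_wordToFree (w : List S) :
    muEval S (wordToFree S w) = wordProd S w := by
  induction w with
  | nil => simp [wordToFree, wordProd]
  | cons s t ih =>
    have : (s :: t) = [s] ++ t := rfl
    rw [this, wordToFree_append, wordProd_append, map_mul, ih]
    simp [wordToFree, muEval, wordProd]

lemma wordProd_take_succ (w : List S) (j : ℕ) (hj : j < w.length) :
    wordProd S (w.take (j + 1)) = wordProd S (w.take j) * (w[j] : G) := by
  rw [List.take_succ, wordProd_append]
  congr 1
  simp [List.getElem?_eq_getElem hj, wordProd]

lemma wordToFree_take_succ (w : List S) (j : ℕ) (hj : j < w.length) :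
    wordToFree S (w.take (j + 1)) = wordToFree S (w.take j) * FreeGroup.of w[j] := by
  rw [List.take_succ, wordToFree_append]
  congr 1
  simp [List.getElem?_eq_getElem hj, wordToFree]

/-- every group element is a product of a word over a symmetric generating set -/
lemma exists_word (hSsymm : S⁻¹ = S) (hSgen : Subgroup.closure S = ⊤) (g : G) :
    ∃ w : List S, wordProd S w = g := by
  have hg : g ∈ Subgroup.closure S := by rw [hSgen]; trivial
  induction hg using Subgroup.closure_induction with
  | mem x hx => exact ⟨[⟨x, hx⟩], by simp [wordProd]⟩
  | one => exact ⟨[], rfl⟩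
  | mul x y hx hy ihx ihy =>
    obtain ⟨u, hu⟩ := ihx; obtain ⟨v, hv⟩ := ihy
    exact ⟨u ++ v, by rw [wordProd_append, hu, hv]⟩
  | inv x hx ih =>
    obtain ⟨u, hu⟩ := ih
    clear hx
    induction u generalizing x with
    | nil => exact ⟨[], by simp [← hu, wordProd_nil]⟩
    | cons s t iht =>
      obtain ⟨t', ht'⟩ := iht (wordProd S t) rfl
      have hsm : (s : G)⁻¹ ∈ S := by
        have h2 : (s : G) ∈ S⁻¹ := by rw [hSsymm]; exact s.2
        exact Set.mem_inv.mp h2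
      refine ⟨t' ++ [⟨(s : G)⁻¹, hsm⟩], ?_⟩
      rw [wordProd_append, ht', ← hu, wordProd_cons]
      simp [wordProd, mul_inv_rev]

lemma wordDist_le (a b : G) {n : ℕ} (w : List S) (hl : w.length ≤ n)
    (hw : wordProd S w = b⁻¹ * a) : wordDist S a b ≤ n :=
  le_trans (Nat.sInf_le ⟨w, rfl, hw⟩) hl

lemma exists_word_of_wordDist (hSsymm : S⁻¹ = S) (hSgen : Subgroup.closure S = ⊤)
    (a b : G) : ∃ w : List S, w.length = wordDist S a b ∧ wordProd S w = b⁻¹ * a := by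
  have hne : {n | ∃ w : List S, w.length = n ∧ wordProd S w = b⁻¹ * a}.Nonempty := by
    obtain ⟨w, hw⟩ := exists_word hSsymm hSgen (b⁻¹ * a)
    exact ⟨w.length, w, rfl, hw⟩
  exact Nat.sInf_mem hne

lemma wordDist_one_one : wordDist S 1 1 = 0 := by
  have : (0 : ℕ) ∈ {n | ∃ w : List S, w.length = n ∧ wordProd S w = (1 : G)⁻¹ * 1} :=
    ⟨[], rfl, by simp [wordProd_nil]⟩
  exact Nat.le_antisymm (Nat.sInf_le this) (Nat.zero_le _)

lemma wordDist_translate (g x y : G) : wordDist S (g * x) (g * y) = wordDist S x y := by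
  unfold wordDist
  congr 1
  ext n
  constructor <;> rintro ⟨w, hl, hw⟩ <;> exact ⟨w, hl, by rw [hw]; group⟩

end QRIso

namespace QRIso

variable {G : Type*} [Group G] {S : Set G}

/-- `x` is a product of at most `N` letters `of s` or `(of s)⁻¹`. -/
def IsGenWord (S : Set G) (N : ℕ) (x : FreeGroup S) : Prop :=
  ∃ l : List (FreeGroup S), l.length ≤ N ∧
    (∀ a ∈ l, ∃ s : S, a = FreeGroup.of s ∨ a = (FreeGroup.of s)⁻¹) ∧ l.prod = x

lemma IsGenWord.mono {N N' : ℕ} (h : N ≤ N') {x : FreeGroup S}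
    (hx : IsGenWord S N x) : IsGenWord S N' x := by
  obtain ⟨l, h1, h2, h3⟩ := hx; exact ⟨l, h1.trans h, h2, h3⟩

lemma isGenWord_one (N : ℕ) : IsGenWord S N (1 : FreeGroup S) :=
  ⟨[], by simp, by simp, rfl⟩

lemma isGenWord_of (s : S) : IsGenWord S 1 (FreeGroup.of s) :=
  ⟨[FreeGroup.of s], by simp, by rintro a ha; simp at ha; exact ⟨s, Or.inl ha⟩, by simp⟩

lemma IsGenWord.mul {N M : ℕ} {x y : FreeGroup S} (hx : IsGenWord S N x)
    (hy : IsGenWord S M y) : IsGenWord S (N + M) (x * y) := by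
  obtain ⟨l, h1, h2, h3⟩ := hx; obtain ⟨m, g1, g2, g3⟩ := hy
  refine ⟨l ++ m, ?_, ?_, by simp [h3, g3]⟩
  · simpa using Nat.add_le_add h1 g1
  · intro a ha; rcases List.mem_append.mp ha with h | h
    · exact h2 a h
    · exact g2 a h

lemma IsGenWord.inv {N : ℕ} {x : FreeGroup S} (hx : IsGenWord S N x) :
    IsGenWord S N x⁻¹ := by
  obtain ⟨l, h1, h2, h3⟩ := hx
  refine ⟨(l.map Inv.inv).reverse, by simpa using h1, ?_, ?_⟩
  · intro a ha
    simp only [List.mem_reverse, List.mem_map] at ha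
    obtain ⟨b, hb, rfl⟩ := ha
    obtain ⟨s, hs | hs⟩ := h2 b hb
    · exact ⟨s, Or.inr (by rw [hs])⟩
    · exact ⟨s, Or.inl (by rw [hs, inv_inv])⟩
  · rw [List.prod_reverse_noncomm, List.map_map, ← h3]
    congr 1
    simp [Function.comp_def]

lemma isGenWord_wordToFree (w : List S) : IsGenWord S w.length (wordToFree S w) := by
  refine ⟨w.map FreeGroup.of, by simp, ?_, rfl⟩
  intro a ha; simp only [List.mem_map] at ha
  obtain ⟨s, _, rfl⟩ := ha
  exact ⟨s, Or.inl rfl⟩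

/-- The set of elements of the free group that are products of at most `N` letters
is finite (when `S` is finite). -/
lemma isGenWord_finite (hSfin : S.Finite) (N : ℕ) :
    {x : FreeGroup S | IsGenWord S N x}.Finite := by
  haveI := hSfin.to_subtype
  induction N with
  | zero =>
    apply Set.Finite.subset (Set.finite_singleton (1 : FreeGroup S))
    rintro x ⟨l, h1, -, h3⟩
    rw [Nat.le_zero, List.length_eq_zero_iff] at h1
    simp [h1] at h3
    simp [← h3]
  | succ n ih =>
    set A : Set (FreeGroup S) :=
      Set.range (fun s : S => FreeGroup.of s) ∪ Set.range (fun s : S => (FreeGroup.of s)⁻¹) with hA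
    have hAfin : A.Finite := (Set.finite_range _).union (Set.finite_range _)
    apply Set.Finite.subset (ih.union (hAfin.mul ih))
    rintro x ⟨l, h1, h2, h3⟩
    match l, h3 with
    | [], h3 => exact Or.inl ⟨[], by simp, by simp, h3⟩
    | a :: t, h3 =>
      right
      have hx : x = a * t.prod := by rw [← h3]; simp
      rw [hx]
      apply Set.mul_mem_mul
      · obtain ⟨s, hs | hs⟩ := h2 a List.mem_cons_self
        · exact Or.inl ⟨s, hs.symm⟩
        · exact Or.inr ⟨s, hs.symm⟩
      · exact ⟨t, by simpa using h1, fun b hb => h2 b (List.mem_cons_of_mem a hb), rfl⟩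

end QRIso

namespace QRIso

variable {G : Type*} [Group G] {S : Set G}

/-- The relator set: null words of letter-length at most `N`. -/
def relSet (S : Set G) (N : ℕ) : Set (FreeGroup S) :=
  {x | muEval S x = 1 ∧ IsGenWord S N x}

lemma relSet_finite (hSfin : S.Finite) (N : ℕ) : (relSet S N).Finite :=
  (isGenWord_finite hSfin N).subset fun _ h => h.2

lemma relSet_ker {N : ℕ} {r : FreeGroup S} (h : r ∈ relSet S N) : muEval S r = 1 := h.1

/-- telescoping product -/
lemma prod_telescope {M : Type*} [Group M] (P : ℕ → M) (m : ℕ) :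
    (List.ofFn (fun j : Fin m => (P j)⁻¹ * P (j + 1))).prod = (P 0)⁻¹ * P m := by
  induction m with
  | zero => simp
  | succ n ih =>
    rw [List.ofFn_succ', List.concat_eq_append, List.prod_append]
    simp only [Fin.coe_castSucc, Fin.val_last, ih]
    rw [List.prod_cons, List.prod_nil]
    group

lemma prod_map_conj {M : Type*} [Group M] (z : M) (l : List M) :
    (l.map fun a => z * a * z⁻¹).prod = z * l.prod * z⁻¹ := by
  induction l with
  | nil => simp
  | cons a t ih => simp only [List.map_cons, List.prod_cons, ih]; group

/-- if `wordToFree S w` is a product of a list of conjugates of elements of `R`,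
then the area is at most the length of the list -/
lemma area_le_of_list {R : Set (FreeGroup S)} {w : List S} (l : List (FreeGroup S))
    (hmem : ∀ x ∈ l, ∃ y r, r ∈ R ∧ x = y * r * y⁻¹)
    (hprod : l.prod = wordToFree S w) : area S R w ≤ l.length := by
  apply Nat.sInf_le
  have hv : ∀ i : Fin l.length, ∃ y r, r ∈ R ∧ l[i] = y * r * y⁻¹ :=
    fun i => hmem l[i] (List.getElem_mem i.2)
  choose y r hr hyr using hv
  refine ⟨y, r, fun i => Or.inl (hr i), ?_⟩
  rw [← hprod]
  have : List.ofFn (fun i => y i * r i * (y i)⁻¹) = l := by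
    conv_rhs => rw [← List.ofFn_getElem (xs := l)]
    exact congrArg List.ofFn (funext fun i => (hyr i).symm)
  rw [this]

lemma mem_normalClosure_of_list {R : Set (FreeGroup S)} (l : List (FreeGroup S))
    (hmem : ∀ x ∈ l, ∃ y r, r ∈ R ∧ x = y * r * y⁻¹) :
    l.prod ∈ Subgroup.normalClosure R := by
  apply Subgroup.list_prod_mem
  intro x hx
  obtain ⟨y, r, hr, rfl⟩ := hmem x hx
  exact Subgroup.normalClosure_normal.conj_mem _ (Subgroup.subset_normalClosure hr) _

end QRIso

namespace QRIso

variable {G : Type*} [Group G] {S : Set G}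

/-- The ladder lemma: if `u`, `v` fellow travel and `μ(v) = μ(u)·s`, then
`ũ · s · ṽ⁻¹` is a product of `max |u| |v| + 1` conjugates of short relators. -/
lemma ladder (hSsymm : S⁻¹ = S) (hSgen : Subgroup.closure S = ⊤) {k : ℕ} (hk : 0 < k)
    (u v : List S) (s : S)
    (hμ : wordProd S v = wordProd S u * s)
    (hft' : ∀ j, wordDist S (wordProd S (v.take j)) (wordProd S (u.take j)) ≤ k) :
    ∃ l : List (FreeGroup S), l.length = max u.length v.length + 1 ∧
      (∀ x ∈ l, ∃ y r, r ∈ relSet S (2 * k + 2) ∧ x = y * r * y⁻¹) ∧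
      l.prod = wordToFree S u * FreeGroup.of s * (wordToFree S v)⁻¹ := by
  set m := max u.length v.length + 1 with hm
  have hum : u.length < m := lt_of_le_of_lt (le_max_left _ _) (Nat.lt_succ_self _)
  have hvm : v.length < m := lt_of_le_of_lt (le_max_right _ _) (Nat.lt_succ_self _)
  choose c hc1 hc2 using fun j : ℕ =>
    exists_word_of_wordDist hSsymm hSgen (wordProd S (v.take j)) (wordProd S (u.take j))
  set γ : ℕ → FreeGroup S := fun j =>
    if j = 0 then 1 else if m ≤ j then FreeGroup.of s else wordToFree S (c j) with hγ
  have hγ0 : γ 0 = 1 := by simp [hγ]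
  have hγm : γ m = FreeGroup.of s := by
    simp [hγ, Nat.succ_ne_zero, hm]
  have hγμ : ∀ j, muEval S (γ j) =
      (wordProd S (u.take j))⁻¹ * wordProd S (v.take j) := by
    intro j
    rcases Nat.eq_zero_or_pos j with rfl | hj
    · simp [hγ0, wordProd_nil]
    by_cases hjm : m ≤ j
    · have h1 : u.take j = u := List.take_of_length_le (le_trans (le_of_lt hum) hjm)
      have h2 : v.take j = v := List.take_of_length_le (le_trans (le_of_lt hvm) hjm)
      simp only [hγ, Nat.pos_iff_ne_zero.mp hj, if_false, hjm, if_true, h1, h2]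
      rw [muEval, FreeGroup.lift_apply_of, hμ]
      group
    · simp only [hγ, Nat.pos_iff_ne_zero.mp hj, if_false, hjm, if_false]
      rw [muEval_wordToFree, hc2 j]
  have hγgen : ∀ j, IsGenWord S k (γ j) := by
    intro j
    rcases Nat.eq_zero_or_pos j with rfl | hj
    · rw [hγ0]; exact isGenWord_one k
    by_cases hjm : m ≤ j
    · simp only [hγ, Nat.pos_iff_ne_zero.mp hj, if_false, hjm, if_true]
      exact (isGenWord_of s).mono hk
    · simp only [hγ, Nat.pos_iff_ne_zero.mp hj, if_false, hjm, if_false]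
      exact (isGenWord_wordToFree (c j)).mono (le_trans (le_of_eq (hc1 j)) (hft' j))
  -- the letters added at each step
  have hstep : ∀ (w : List S) (j : ℕ),
      IsGenWord S 1 ((wordToFree S (w.take j))⁻¹ * wordToFree S (w.take (j + 1))) ∧
      muEval S ((wordToFree S (w.take j))⁻¹ * wordToFree S (w.take (j + 1))) =
        (wordProd S (w.take j))⁻¹ * wordProd S (w.take (j + 1)) := by
    intro w j
    refine ⟨?_, by rw [map_mul, map_inv, muEval_wordToFree, muEval_wordToFree]⟩
    by_cases hj : j < w.length
    · rw [wordToFree_take_succ w j hj]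
      rw [inv_mul_cancel_left]
      exact isGenWord_of _
    · push_neg at hj
      rw [List.take_of_length_le hj, List.take_of_length_le (le_trans hj (Nat.le_succ j))]
      rw [inv_mul_cancel]
      exact (isGenWord_one 1)
  set P : ℕ → FreeGroup S := fun j =>
    wordToFree S (u.take j) * γ j * (wordToFree S (v.take j))⁻¹ with hP
  refine ⟨List.ofFn (fun j : Fin m => (P j)⁻¹ * P (j + 1)), by simp [hm], ?_, ?_⟩
  · intro x hx
    rw [List.mem_ofFn] at hx
    obtain ⟨j, rfl⟩ := hx
    set aj := (wordToFree S (u.take (j : ℕ)))⁻¹ * wordToFree S (u.take ((j : ℕ) + 1)) with haj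
    set bj := (wordToFree S (v.take (j : ℕ)))⁻¹ * wordToFree S (v.take ((j : ℕ) + 1)) with hbj
    refine ⟨wordToFree S (v.take (j : ℕ)), (γ (j : ℕ))⁻¹ * aj * γ ((j : ℕ) + 1) * bj⁻¹, ⟨?_, ?_⟩, ?_⟩
    · rw [map_mul, map_mul, map_mul, map_inv, map_inv, hγμ, hγμ,
        (hstep u (j : ℕ)).2, (hstep v (j : ℕ)).2]
      group
    · have h1 := (hγgen (j : ℕ)).inv
      have h2 := (hstep u (j : ℕ)).1
      have h3 := hγgen ((j : ℕ) + 1)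
      have h4 := (hstep v (j : ℕ)).1.inv
      have := ((h1.mul h2).mul h3).mul h4
      exact this.mono (by omega)
    · rw [hP, haj, hbj]
      group
  · rw [prod_telescope P m]
    have hP0 : P 0 = 1 := by simp [hP, hγ0, wordToFree_nil]
    have hPm : P m = wordToFree S u * FreeGroup.of s * (wordToFree S v)⁻¹ := by
      rw [hP]
      simp only
      rw [List.take_of_length_le (le_of_lt hum), List.take_of_length_le (le_of_lt hvm), hγm]
    rw [hP0, hPm]
    group

end QRIso

namespace QRIso

variable {G : Type*} [Group G] {S : Set G}

/-- Length of a shortest accepted word representing `g`. -/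
noncomputable def lenL (S : Set G) (L : Language S) (g : G) : ℕ :=
  sInf {n | ∃ u, u ∈ L ∧ wordProd S u = g ∧ u.length = n}

lemma lenL_spec {L : Language S} (hsurj : ∀ g : G, ∃ w ∈ L, wordProd S w = g) (g : G) :
    ∃ u, u ∈ L ∧ wordProd S u = g ∧ u.length = lenL S L g := by
  have hne : {n | ∃ u, u ∈ L ∧ wordProd S u = g ∧ u.length = n}.Nonempty := by
    obtain ⟨u, hu, hp⟩ := hsurj g
    exact ⟨u.length, u, hu, hp, rfl⟩
  obtain ⟨u, h1, h2, h3⟩ := Nat.sInf_mem hne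
  exact ⟨u, h1, h2, h3⟩

lemma lenL_le {L : Language S} {g : G} {u : List S} (hu : u ∈ L)
    (hp : wordProd S u = g) : lenL S L g ≤ u.length :=
  Nat.sInf_le ⟨u, hu, hp, rfl⟩

/-- balls for the word metric are finite -/
lemma ball_finite (hSfin : S.Finite) (hSsymm : S⁻¹ = S) (hSgen : Subgroup.closure S = ⊤)
    (k : ℕ) : {x : G | wordDist S x 1 ≤ k}.Finite := by
  haveI := hSfin.to_subtype
  have key : ∀ n : ℕ, {x : G | ∃ w : List S, w.length ≤ n ∧ wordProd S w = x}.Finite := by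
    intro n
    induction n with
    | zero =>
      apply Set.Finite.subset (Set.finite_singleton (1 : G))
      rintro x ⟨w, h1, h2⟩
      rw [Nat.le_zero, List.length_eq_zero_iff] at h1
      subst h1
      simp [← h2, wordProd_nil]
    | succ n ih =>
      have hrange : (Set.range (fun s : S => (s : G))).Finite := Set.finite_range _
      apply Set.Finite.subset (ih.union (hrange.mul ih))
      rintro x ⟨w, h1, h2⟩
      match w, h2 with
      | [], h2 => exact Or.inl ⟨[], by simp, h2⟩
      | a :: t, h2 =>
        right
        have hx : x = (a : G) * wordProd S t := by rw [← h2, wordProd_cons]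
        rw [hx]
        exact Set.mul_mem_mul ⟨a, rfl⟩ ⟨t, by simpa using h1, rfl⟩
  apply Set.Finite.subset (key k)
  intro x hx
  obtain ⟨w, hw1, hw2⟩ := exists_word_of_wordDist hSsymm hSgen x 1
  exact ⟨w, le_trans (le_of_eq hw1) hx, by rw [hw2]; group⟩

lemma lenL_step (hSsymm : S⁻¹ = S) (hSgen : Subgroup.closure S = ⊤)
    {L : Language S} {Q : Type} [Fintype Q] {M : DFA S Q} (hM : M.accepts = L)
    (hsurj : ∀ g : G, ∃ w ∈ L, wordProd S w = g)
    {k : ℕ}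
    (hft : ∀ u ∈ L, ∀ v ∈ L, wordDist S (wordProd S u) (wordProd S v) ≤ 1 →
      ∀ i : ℕ, wordDist S (wordProd S (u.take i)) (wordProd S (v.take i)) ≤ k)
    (hB : {x : G | wordDist S x 1 ≤ k}.Finite)
    (g : G) (s : S) :
    lenL S L (g * s) ≤ lenL S L g + (Fintype.card Q * hB.toFinset.card + 1) := by
  obtain ⟨u, huL, hup, hulen⟩ := lenL_spec hsurj g
  obtain ⟨v, hvL, hvp, hvlen⟩ := lenL_spec hsurj (g * s)
  by_contra hcon
  push_neg at hcon
  have hd1 : wordDist S (wordProd S v) (wordProd S u) ≤ 1 := by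
    apply wordDist_le _ _ [s] (by simp)
    rw [hup, hvp, wordProd_singleton]
    group
  have hft' := hft v hvL u huL hd1
  have hvu : u.length ≤ v.length := by omega
  have main : ∀ i j : ℕ, i ∈ Finset.Icc u.length v.length →
      j ∈ Finset.Icc u.length v.length → i < j →
      M.eval (v.take i) = M.eval (v.take j) →
      g⁻¹ * wordProd S (v.take i) = g⁻¹ * wordProd S (v.take j) → False := by
    intro i j hi hj hij heval hprod
    have hjv : j ≤ v.length := (Finset.mem_Icc.mp hj).2
    set v' := v.take i ++ v.drop j with hv'
    have hv'L : v' ∈ L := by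
      rw [← hM, DFA.mem_accepts] at hvL ⊢
      have h2 : M.eval v' = M.eval v := by
        have e1 : M.eval v' = M.evalFrom (M.eval (v.take i)) (v.drop j) :=
          DFA.evalFrom_of_append M M.start _ _
        rw [e1, heval]
        show M.evalFrom (M.evalFrom M.start (v.take j)) (v.drop j) = _
        rw [← DFA.evalFrom_of_append, List.take_append_drop]
        rfl
      rw [h2]; exact hvL
    have hv'p : wordProd S v' = g * s := by
      rw [hv', wordProd_append, mul_left_cancel hprod, ← wordProd_append,
        List.take_append_drop, hvp]
    have hlen : v'.length < v.length := by
      rw [hv', List.length_append, List.length_take, List.length_drop]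
      have : min i v.length = i := min_eq_left (le_trans (le_of_lt hij) hjv)
      omega
    have := lenL_le hv'L hv'p
    omega
  have hmap : ∀ i ∈ Finset.Icc u.length v.length,
      (M.eval (v.take i), g⁻¹ * wordProd S (v.take i)) ∈
        (Finset.univ : Finset Q) ×ˢ hB.toFinset := by
    intro i hi
    simp only [Finset.mem_product, Finset.mem_univ, true_and]
    rw [Set.Finite.mem_toFinset]
    show wordDist S (g⁻¹ * wordProd S (v.take i)) 1 ≤ k
    have htr := wordDist_translate (S := S) g (g⁻¹ * wordProd S (v.take i)) 1
    simp only [mul_inv_cancel_left, mul_one] at htr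
    rw [← htr]
    have h := hft' i
    rwa [List.take_of_length_le (Finset.mem_Icc.mp hi).1, hup] at h
  have hcard : ((Finset.univ : Finset Q) ×ˢ hB.toFinset).card <
      (Finset.Icc u.length v.length).card := by
    rw [Finset.card_product, Nat.card_Icc, Finset.card_univ]
    omega
  obtain ⟨i, hi, j, hj, hne, heq⟩ :=
    Finset.exists_ne_map_eq_of_card_lt_of_maps_to hcard hmap
  rw [Prod.mk.injEq] at heq
  rcases lt_or_gt_of_ne hne with hlt | hlt
  · exact main i j hi hj hlt heq.1 heq.2
  · exact main j i hj hi hlt heq.1.symm heq.2.symm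

lemma exists_rep (hSfin : S.Finite) (hSsymm : S⁻¹ = S) (hSgen : Subgroup.closure S = ⊤)
    {L : Language S} {Q : Type} [Fintype Q] {M : DFA S Q} (hM : M.accepts = L)
    (hsurj : ∀ g : G, ∃ w ∈ L, wordProd S w = g)
    {k : ℕ}
    (hft : ∀ u ∈ L, ∀ v ∈ L, wordDist S (wordProd S u) (wordProd S v) ≤ 1 →
      ∀ i : ℕ, wordDist S (wordProd S (u.take i)) (wordProd S (v.take i)) ≤ k) :
    ∃ N : ℕ, 0 < N ∧ ∀ g : G, ∃ u, u ∈ L ∧ wordProd S u = g ∧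
      u.length ≤ N * (wordDist S g 1 + 1) := by
  have hB := ball_finite hSfin hSsymm hSgen k
  set D := Fintype.card Q * hB.toFinset.card + 1 with hD
  have hstep : ∀ (g : G) (s : S), lenL S L (g * s) ≤ lenL S L g + D :=
    lenL_step hSsymm hSgen hM hsurj hft hB
  have hword : ∀ w : List S, lenL S L (wordProd S w) ≤ lenL S L 1 + D * w.length := by
    intro w
    induction w using List.reverseRecOn with
    | nil => simp [wordProd_nil]
    | append_singleton t s ih =>
      rw [wordProd_append, wordProd_singleton]
      calc lenL S L (wordProd S t * s) ≤ lenL S L (wordProd S t) + D := hstep _ s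
        _ ≤ lenL S L 1 + D * t.length + D := by omega
        _ = lenL S L 1 + D * (t ++ [s]).length := by simp; ring
  refine ⟨lenL S L 1 + D, by positivity, fun g => ?_⟩
  obtain ⟨w, hw1, hw2⟩ := exists_word_of_wordDist hSsymm hSgen g 1
  have hg : wordProd S w = g := by rw [hw2]; group
  have h1 : lenL S L g ≤ lenL S L 1 + D * wordDist S g 1 := by
    rw [← hw1, ← hg]; exact hword w
  obtain ⟨u, huL, hup, hulen⟩ := lenL_spec hsurj g
  refine ⟨u, huL, hup, ?_⟩
  set A := lenL S L 1
  set d := wordDist S g 1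
  have hexp : (A + D) * (d + 1) = A * d + A + D * d + D := by ring
  omega

end QRIso

namespace QRIso

variable {G : Type*} [Group G] {S : Set G}

/-- Main decomposition: a null word is a product of conjugates of short relators,
with controlled number of factors. -/
lemma main_decomp (hSsymm : S⁻¹ = S) (hSgen : Subgroup.closure S = ⊤)
    {L : Language S} {k : ℕ} (hk : 0 < k)
    (hftL : ∀ u ∈ L, ∀ v ∈ L, wordDist S (wordProd S u) (wordProd S v) ≤ 1 →
      ∀ i : ℕ, wordDist S (wordProd S (u.take i)) (wordProd S (v.take i)) ≤ k)
    (rep : G → List S) (hrepL : ∀ g, rep g ∈ L) (hrepP : ∀ g, wordProd S (rep g) = g)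
    (w : List S) (hw : wordProd S w = 1) :
    ∃ l : List (FreeGroup S),
      (∀ x ∈ l, ∃ y r, r ∈ relSet S (2 * k + 2) ∧ x = y * r * y⁻¹) ∧
      l.prod = wordToFree S w ∧
      l.length = ∑ j : Fin w.length,
        (max (rep (wordProd S (w.take (j : ℕ)))).length
          (rep (wordProd S (w.take ((j : ℕ) + 1)))).length + 1) := by
  set n := w.length with hn
  set X : ℕ → FreeGroup S := fun j => wordToFree S (rep (wordProd S (w.take j))) with hX
  have hlad : ∀ j : Fin n, ∃ l : List (FreeGroup S),
      l.length = max (rep (wordProd S (w.take (j : ℕ)))).length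
        (rep (wordProd S (w.take ((j : ℕ) + 1)))).length + 1 ∧
      (∀ x ∈ l, ∃ y r, r ∈ relSet S (2 * k + 2) ∧ x = y * r * y⁻¹) ∧
      l.prod = X (j : ℕ) * FreeGroup.of (w[(j : ℕ)]) * (X ((j : ℕ) + 1))⁻¹ := by
    intro j
    have hμ : wordProd S (rep (wordProd S (w.take ((j : ℕ) + 1)))) =
        wordProd S (rep (wordProd S (w.take (j : ℕ)))) * (w[(j : ℕ)] : G) := by
      rw [hrepP, hrepP, wordProd_take_succ w (j : ℕ) j.2]
    have hd1 : wordDist S (wordProd S (rep (wordProd S (w.take ((j : ℕ) + 1)))))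
        (wordProd S (rep (wordProd S (w.take (j : ℕ))))) ≤ 1 := by
      apply wordDist_le _ _ [w[(j : ℕ)]] (by simp)
      rw [hμ, wordProd_singleton]
      group
    have hft' := hftL _ (hrepL (wordProd S (w.take ((j : ℕ) + 1)))) _
      (hrepL (wordProd S (w.take (j : ℕ)))) hd1
    exact ladder hSsymm hSgen hk _ _ _ hμ hft'
  choose ℓf hlen hmem hprod using hlad
  set z : FreeGroup S := (X 0)⁻¹ with hz
  refine ⟨(List.ofFn ℓf).flatten.map (fun a => z * a * z⁻¹), ?_, ?_, ?_⟩
  · intro x hx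
    rw [List.mem_map] at hx
    obtain ⟨a, ha, rfl⟩ := hx
    rw [List.mem_flatten] at ha
    obtain ⟨l, hl, hal⟩ := ha
    rw [List.mem_ofFn] at hl
    obtain ⟨j, rfl⟩ := hl
    obtain ⟨y, r, hr, rfl⟩ := hmem j _ hal
    exact ⟨z * y, r, hr, by group⟩
  · rw [prod_map_conj, List.prod_flatten, List.map_ofFn]
    have h1 : (List.ofFn (List.prod ∘ ℓf)).prod =
        (List.ofFn (fun j : Fin n =>
          (wordToFree S (w.take (j : ℕ)) * (X (j : ℕ))⁻¹)⁻¹ *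
          (wordToFree S (w.take ((j : ℕ) + 1)) * (X ((j : ℕ) + 1))⁻¹))).prod := by
      refine congrArg List.prod (congrArg List.ofFn (funext fun j => ?_))
      rw [Function.comp_apply, hprod j, wordToFree_take_succ w (j : ℕ) j.2]
      group
    rw [h1, prod_telescope (fun j => wordToFree S (w.take j) * (X j)⁻¹) n]
    have hX0 : wordToFree S (w.take 0) = 1 := by simp [wordToFree_nil]
    have hXn : X n = X 0 := by
      rw [hX]
      simp only
      rw [List.take_of_length_le (le_of_eq hn.symm), hw]
      simp [wordProd_nil]
    have htn : wordToFree S (w.take n) = wordToFree S w := by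
      rw [List.take_of_length_le (le_of_eq hn.symm)]
    rw [hX0, hXn, htn, hz]
    group
  · rw [List.length_map, List.length_flatten, List.map_ofFn]
    have : (List.ofFn (List.length ∘ ℓf)).sum = ∑ j : Fin n, (ℓf j).length :=
      List.sum_ofFn
    rw [this]
    exact Finset.sum_congr rfl (fun j _ => hlen j)

/-- replace an arbitrary free group element by a positive word, modulo relators -/
lemma reduce_to_word (hSsymm : S⁻¹ = S) {k : ℕ} (hk : 0 < k) (x : FreeGroup S) :
    ∃ w : List S, wordProd S w = muEval S x ∧
      x * (wordToFree S w)⁻¹ ∈ Subgroup.normalClosure (relSet S (2 * k + 2)) := by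
  haveI : (Subgroup.normalClosure (relSet S (2 * k + 2))).Normal :=
    Subgroup.normalClosure_normal
  induction x using FreeGroup.induction_on with
  | C1 =>
    exact ⟨[], by simp [wordProd_nil], by simp [wordToFree_nil]⟩
  | of s =>
    refine ⟨[s], ?_, ?_⟩
    · rw [wordProd_singleton]
      show _ = muEval S (FreeGroup.of s)
      rw [muEval, FreeGroup.lift_apply_of]
    · have h1 : wordToFree S [s] = FreeGroup.of s := by simp [wordToFree]
      show FreeGroup.of s * (wordToFree S [s])⁻¹ ∈ _
      rw [h1, mul_inv_cancel]
      exact Subgroup.one_mem _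
  | inv_of s _ =>
    have hsm : ((s : G))⁻¹ ∈ S := by
      have h2 : (s : G) ∈ S⁻¹ := by rw [hSsymm]; exact s.2
      exact Set.mem_inv.mp h2
    set s' : S := ⟨((s : G))⁻¹, hsm⟩ with hs'
    refine ⟨[s'], ?_, ?_⟩
    · rw [wordProd_singleton]
      show _ = muEval S (FreeGroup.of s)⁻¹
      rw [map_inv, muEval, FreeGroup.lift_apply_of]
    · have h1 : wordToFree S [s'] = FreeGroup.of s' := by simp [wordToFree]
      show (FreeGroup.of s)⁻¹ * (wordToFree S [s'])⁻¹ ∈ _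
      rw [h1]
      have h2 : (FreeGroup.of s)⁻¹ * (FreeGroup.of s')⁻¹ =
          (FreeGroup.of s' * FreeGroup.of s)⁻¹ := by group
      rw [h2]
      apply Subgroup.inv_mem
      apply Subgroup.subset_normalClosure
      constructor
      · rw [map_mul, muEval, FreeGroup.lift_apply_of, FreeGroup.lift_apply_of, hs']
        simp
      · have := (isGenWord_of s').mul (isGenWord_of s)
        exact this.mono (by omega)
  | mul x y ihx ihy =>
    obtain ⟨wx, hwx1, hwx2⟩ := ihx
    obtain ⟨wy, hwy1, hwy2⟩ := ihy
    refine ⟨wx ++ wy, ?_, ?_⟩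
    · rw [wordProd_append, hwx1, hwy1, map_mul]
    · rw [wordToFree_append]
      have : x * y * (wordToFree S wx * wordToFree S wy)⁻¹ =
          (x * (y * (wordToFree S wy)⁻¹) * x⁻¹) * (x * (wordToFree S wx)⁻¹) := by group
      rw [this]
      exact Subgroup.mul_mem _
        ((Subgroup.normalClosure_normal).conj_mem _ hwy2 x) hwx2

end QRIso


/-- An automatic group satisfies the quadratic radial isoperimetric
inequality. -/
theorem automatic_imp_quadratic_radial_isoperimetric
    {G : Type*} [Group G] (S : Set G)
    (hSfin : S.Finite) (hSsymm : S⁻¹ = S) (hSgen : Subgroup.closure S = ⊤)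
    (L : Language S)
    -- `L` is a regular language over the alphabet `S`
    (hreg : ∃ (Q : Type) (_ : Fintype Q) (M : DFA S Q), M.accepts = L)
    -- the evaluation map `μ : L → G` is surjective
    (hsurj : ∀ g : G, ∃ w ∈ L, wordProd S w = g)
    -- the `k`-fellow traveler property
    (hft : ∃ k : ℕ, 0 < k ∧ ∀ u ∈ L, ∀ v ∈ L,
      wordDist S (wordProd S u) (wordProd S v) ≤ 1 →
      ∀ i : ℕ, wordDist S (wordProd S (u.take i)) (wordProd S (v.take i)) ≤ k) :
    ∃ R : Set (FreeGroup S), R.Finite ∧ (∀ r ∈ R, muEval S r = 1) ∧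
      Subgroup.normalClosure R = (muEval S).ker ∧
      ∃ C : ℝ, 0 < C ∧ ∀ w : List S, wordProd S w = 1 →
        (area S R w : ℝ) ≤ C * ∑ i ∈ Finset.range w.length,
          ((wordDist S (wordProd S (w.take (i + 1))) 1 : ℝ) + 1) := by
  classical
  obtain ⟨k, hk, hftL⟩ := hft
  obtain ⟨Q, hQ, M, hM⟩ := hreg
  haveI := hQ
  obtain ⟨N, hN, hrep⟩ := QRIso.exists_rep hSfin hSsymm hSgen hM hsurj hftL
  choose rep hrepL hrepP hreplen using hrep
  refine ⟨QRIso.relSet S (2 * k + 2), QRIso.relSet_finite hSfin _,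
    fun r hr => hr.1, ?_, ?_⟩
  · apply le_antisymm
    · apply Subgroup.normalClosure_le_normal
      intro r hr
      simp only [SetLike.mem_coe, MonoidHom.mem_ker]
      exact hr.1
    · intro x hx
      rw [MonoidHom.mem_ker] at hx
      obtain ⟨w, hw1, hw2⟩ := QRIso.reduce_to_word hSsymm hk x
      rw [hx] at hw1
      obtain ⟨l, hmem, hprod, -⟩ :=
        QRIso.main_decomp hSsymm hSgen hk hftL rep hrepL hrepP w hw1
      have h1 : wordToFree S w ∈ Subgroup.normalClosure (QRIso.relSet S (2 * k + 2)) := by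
        rw [← hprod]; exact QRIso.mem_normalClosure_of_list l hmem
      have hx2 : x = (x * (wordToFree S w)⁻¹) * wordToFree S w := by group
      rw [hx2]
      exact Subgroup.mul_mem _ hw2 h1
  · refine ⟨((3 * N + 1 : ℕ) : ℝ), by exact_mod_cast Nat.succ_pos (3 * N), ?_⟩
    intro w hw
    obtain ⟨l, hmem, hprod, hlen⟩ :=
      QRIso.main_decomp hSsymm hSgen hk hftL rep hrepL hrepP w hw
    have harea : area S (QRIso.relSet S (2 * k + 2)) w ≤ l.length :=
      QRIso.area_le_of_list l hmem hprod
    set n := w.length with hn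
    set f : ℕ → ℕ := fun j => wordDist S (wordProd S (w.take j)) 1 + 1 with hf
    set Tn : ℕ := ∑ j ∈ Finset.range n, f (j + 1) with hTn
    have hcast : ((Tn : ℕ) : ℝ) = ∑ i ∈ Finset.range n,
        ((wordDist S (wordProd S (w.take (i + 1))) 1 : ℝ) + 1) := by
      rw [hTn]
      push_cast
      simp [hf]
    rcases Nat.eq_zero_or_pos n with hn0 | hn1
    · have hTn0 : Tn = 0 := by rw [hTn, hn0]; simp
      have hl0 : l.length = 0 := by
        rw [hlen, Fin.sum_univ_eq_sum_range
          (fun j => max (rep (wordProd S (w.take j))).length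
            (rep (wordProd S (w.take (j + 1)))).length + 1) n, hn0]
        simp
      have : area S (QRIso.relSet S (2 * k + 2)) w = 0 := Nat.le_zero.mp (hl0 ▸ harea)
      rw [this, ← hcast, hTn0]
      simp
    · -- claim 1
      have hc1 : l.length ≤ ∑ j ∈ Finset.range n, (N * f j + N * f (j + 1) + 1) := by
        rw [hlen, Fin.sum_univ_eq_sum_range
          (fun j => max (rep (wordProd S (w.take j))).length
            (rep (wordProd S (w.take (j + 1)))).length + 1) n]
        apply Finset.sum_le_sum
        intro j _
        simp only [hf]
        have ha := hreplen (wordProd S (w.take j))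
        have hb := hreplen (wordProd S (w.take (j + 1)))
        have hmax := max_le
          (le_trans ha (Nat.le_add_right _ (N * (wordDist S (wordProd S (w.take (j + 1))) 1 + 1))))
          (le_trans hb (Nat.le_add_left _ (N * (wordDist S (wordProd S (w.take j)) 1 + 1))))
        exact Nat.add_le_add_right hmax 1
      have hc2 : ∑ j ∈ Finset.range n, (N * f j + N * f (j + 1) + 1) =
          N * (∑ j ∈ Finset.range n, f j) + N * Tn + n := by
        rw [hTn, Finset.sum_add_distrib, Finset.sum_add_distrib, ← Finset.mul_sum,
          ← Finset.mul_sum]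
        simp
      have hf0 : f 0 = 1 := by
        rw [hf]
        simp only [List.take_zero]
        rw [QRIso.wordProd_nil, QRIso.wordDist_one_one]
      have hc3 : ∑ j ∈ Finset.range n, f j ≤ Tn + 1 := by
        obtain ⟨m, hm⟩ := Nat.exists_eq_add_of_lt hn1
        have hm' : n = m + 1 := by omega
        rw [hm', Finset.sum_range_succ' f m, hf0]
        have hsub : ∑ j ∈ Finset.range m, f (j + 1) ≤ Tn := by
          rw [hTn]
          apply Finset.sum_le_sum_of_subset
          exact Finset.range_subset_range.mpr (by omega)
        omega
      have hc4 : n ≤ Tn := by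
        rw [hTn]
        calc n = ∑ _j ∈ Finset.range n, 1 := by simp
          _ ≤ ∑ j ∈ Finset.range n, f (j + 1) :=
            Finset.sum_le_sum (fun j _ => by simp only [hf]; omega)
      have htot : l.length ≤ N * (Tn + 1) + N * Tn + n := by
        calc l.length ≤ N * (∑ j ∈ Finset.range n, f j) + N * Tn + n := by
              rw [← hc2]; exact hc1
          _ ≤ N * (Tn + 1) + N * Tn + n := by
              have := Nat.mul_le_mul_left N hc3
              omega
      -- pass to ℝ
      have hTn1 : (1 : ℝ) ≤ (Tn : ℝ) := by exact_mod_cast le_trans hn1 hc4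
      have hnR : ((n : ℕ) : ℝ) ≤ (Tn : ℝ) := by exact_mod_cast hc4
      have hareaR : (area S (QRIso.relSet S (2 * k + 2)) w : ℝ) ≤
          (N : ℝ) * ((Tn : ℝ) + 1) + (N : ℝ) * (Tn : ℝ) + (n : ℝ) := by
        have h := le_trans harea htot
        calc (area S (QRIso.relSet S (2 * k + 2)) w : ℝ)
            ≤ ((N * (Tn + 1) + N * Tn + n : ℕ) : ℝ) := by exact_mod_cast h
          _ = (N : ℝ) * ((Tn : ℝ) + 1) + (N : ℝ) * (Tn : ℝ) + (n : ℝ) := by push_cast; ring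
      rw [← hcast]
      have hNR : (1 : ℝ) ≤ (N : ℝ) := by exact_mod_cast hN
      push_cast
      nlinarith [mul_nonneg (le_trans zero_le_one hNR) (sub_nonneg.mpr hTn1)]
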